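/- Let T be a nonnegative random variable with finite mean and let N(T) be the mixed Poisson random variable with mixing distribution T. Let α > 1 be non-integer and L slowly varying. Then P(T > x) ∼ x^{-α} L(x) as x → ∞ if and only if P(N(T) > x) ∼ x^{-α} L(x) as x → ∞. -/

import Mathlib

set_option maxHeartbeats 1600000

open MeasureTheory ProbabilityTheory Filter Topology

/-- Poisson pmf term. -/
noncomputable def pg (k : ℕ) (t : ℝ) : ℝ := Real.exp (-t) * t ^ k / (Nat.factorial k : ℝ)

/-- Poisson cdf at `m`. -/
noncomputable def pS (m : ℕ) (t : ℝ) : ℝ := ∑ k ∈ Finset.range (m + 1), pg k t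

lemma pg_nonneg {k : ℕ} {t : ℝ} (ht : 0 ≤ t) : 0 ≤ pg k t := by
  unfold pg; positivity

lemma pS_nonneg {m : ℕ} {t : ℝ} (ht : 0 ≤ t) : 0 ≤ pS m t :=
  Finset.sum_nonneg fun k _ => pg_nonneg ht

lemma pS_le_one {m : ℕ} {t : ℝ} (ht : 0 ≤ t) : pS m t ≤ 1 := by
  have h1 : pS m t = Real.exp (-t) * ∑ k ∈ Finset.range (m + 1), t ^ k / (Nat.factorial k : ℝ) := by
    rw [Finset.mul_sum]
    refine Finset.sum_congr rfl fun k _ => ?_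
    unfold pg; ring
  rw [h1]
  have h2 := Real.sum_le_exp_of_nonneg ht (m + 1)
  calc Real.exp (-t) * ∑ k ∈ Finset.range (m + 1), t ^ k / (Nat.factorial k : ℝ)
      ≤ Real.exp (-t) * Real.exp t := by
        exact mul_le_mul_of_nonneg_left h2 (Real.exp_nonneg _)
    _ = 1 := by rw [← Real.exp_add]; simp

lemma pg_le_one {k : ℕ} {t : ℝ} (ht : 0 ≤ t) : pg k t ≤ 1 := by
  have : pg k t ≤ pS k t := by
    unfold pS
    exact Finset.single_le_sum (f := fun i => pg i t) (fun i _ => pg_nonneg ht)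
      (Finset.self_mem_range_succ k)
  exact this.trans (pS_le_one ht)

lemma hasDerivAt_pg_succ (j : ℕ) (t : ℝ) :
    HasDerivAt (pg (j + 1))
      (Real.exp (-t) * t ^ j / (Nat.factorial j : ℝ)
        - Real.exp (-t) * t ^ (j + 1) / (Nat.factorial (j + 1) : ℝ)) t := by
  have h1 : HasDerivAt (fun t : ℝ => Real.exp (-t)) (-Real.exp (-t)) t := by
    simpa using ((hasDerivAt_neg t).exp)
  have h2 := (h1.mul (hasDerivAt_pow (j + 1) t)).div_const ((Nat.factorial (j + 1) : ℝ))
  refine h2.congr_deriv ?_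
  have hfac : (Nat.factorial (j + 1) : ℝ) = (j + 1) * Nat.factorial j := by
    push_cast [Nat.factorial_succ]; ring
  have hj : (Nat.factorial j : ℝ) ≠ 0 := by positivity
  have hj1 : ((j : ℝ) + 1) ≠ 0 := by positivity
  rw [hfac, Nat.add_sub_cancel]
  push_cast
  field_simp [hfac]
  ring

lemma hasDerivAt_pS (m : ℕ) (t : ℝ) :
    HasDerivAt (pS m) (-(Real.exp (-t) * t ^ m / (Nat.factorial m : ℝ))) t := by
  induction m with
  | zero =>
    have h1 : HasDerivAt (fun t : ℝ => Real.exp (-t)) (-Real.exp (-t)) t := by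
      simpa using ((hasDerivAt_neg t).exp)
    have : pS 0 = fun t : ℝ => Real.exp (-t) := by
      funext t; simp [pS, pg]
    rw [this]
    simpa using h1
  | succ j ih =>
    have hsum : pS (j + 1) = fun t => pS j t + pg (j + 1) t := by
      funext t; simp [pS, Finset.sum_range_succ]
    rw [hsum]
    have := ih.add (hasDerivAt_pg_succ j t)
    refine this.congr_deriv ?_
    ring

lemma pS_anti (m : ℕ) {a b : ℝ} (ha : 0 ≤ a) (hab : a ≤ b) : pS m b ≤ pS m a := by
  have hd : ∀ x : ℝ, HasDerivAt (pS m) (-(Real.exp (-x) * x ^ m / (Nat.factorial m : ℝ))) x :=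
    hasDerivAt_pS m
  have hanti : AntitoneOn (pS m) (Set.Ici (0 : ℝ)) := by
    refine antitoneOn_of_deriv_nonpos (convex_Ici 0) ?_ ?_ ?_
    · exact fun x _ => ((hd x).differentiableAt.continuousAt.continuousWithinAt)
    · exact fun x _ => ((hd x).differentiableAt.differentiableWithinAt)
    · intro x hx
      rw [interior_Ici] at hx
      rw [(hd x).deriv]
      have hx0 : (0:ℝ) < x := hx
      have : (0:ℝ) ≤ Real.exp (-x) * x ^ m / (Nat.factorial m : ℝ) := by positivity
      linarith
  exact hanti ha (le_trans ha hab) hab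

/-- `k^k ≤ e^k k!` -/
lemma pow_self_le_exp_mul_factorial (k : ℕ) :
    (k : ℝ) ^ k ≤ Real.exp k * Nat.factorial k := by
  have h1 : (k : ℝ) ^ k / (Nat.factorial k : ℝ) ≤ Real.exp k := by
    have := Real.sum_le_exp_of_nonneg (x := (k : ℝ)) (Nat.cast_nonneg k) (k + 1)
    refine le_trans ?_ this
    exact Finset.single_le_sum (f := fun i => (k:ℝ) ^ i / (Nat.factorial i : ℝ))
      (fun i _ => by positivity) (Finset.self_mem_range_succ k)
  have hk : (0:ℝ) < (Nat.factorial k : ℝ) := by positivity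
  calc (k:ℝ)^k = (k:ℝ)^k / (Nat.factorial k : ℝ) * (Nat.factorial k : ℝ) := by field_simp
    _ ≤ Real.exp k * Nat.factorial k := by
        exact mul_le_mul_of_nonneg_right h1 hk.le

/-- Stirling-type bound: `e^{-t} t^k / k! ≤ exp(k(1 + log(t/k)) - t)` for `k ≥ 1`, `t > 0`. -/
lemma pg_le_exp_bound {k : ℕ} (hk : 1 ≤ k) {t : ℝ} (ht : 0 < t) :
    Real.exp (-t) * t ^ k / (Nat.factorial k : ℝ)
      ≤ Real.exp ((k : ℝ) * (1 + Real.log (t / k)) - t) := by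
  have hk0 : (0:ℝ) < (k:ℝ) := by exact_mod_cast hk
  have hfac : (0:ℝ) < (Nat.factorial k : ℝ) := by positivity
  have h1 : Real.exp (-t) * t ^ k / (Nat.factorial k : ℝ)
      ≤ Real.exp (-t) * t ^ k * Real.exp k / (k:ℝ) ^ k := by
    rw [div_le_div_iff₀ hfac (by positivity)]
    have h2 := pow_self_le_exp_mul_factorial k
    have h3 : (0:ℝ) ≤ Real.exp (-t) * t ^ k := by positivity
    nlinarith [h3, h2, Real.exp_pos (-t), pow_pos ht k]
  refine h1.trans_eq ?_
  have htk : t ^ k = Real.exp ((k : ℝ) * Real.log t) := by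
    rw [Real.exp_nat_mul, Real.exp_log ht]
  have hkk : (k:ℝ) ^ k = Real.exp ((k : ℝ) * Real.log k) := by
    rw [Real.exp_nat_mul, Real.exp_log hk0]
  rw [htk, hkk, ← Real.exp_add, ← Real.exp_add, ← Real.exp_sub, Real.exp_eq_exp,
    Real.log_div (ne_of_gt ht) (ne_of_gt hk0)]
  ring

/-- polynomial times decaying exponential. -/
lemma poly_mul_exp_decay {c : ℝ} (hc : 0 < c) (n : ℕ) :
    Tendsto (fun x : ℝ => x ^ n * Real.exp (-(c * x))) atTop (𝓝 0) := by
  have h := Real.tendsto_pow_mul_exp_neg_atTop_nhds_zero n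
  have h2 : Tendsto (fun x : ℝ => c * x) atTop atTop :=
    Tendsto.const_mul_atTop hc tendsto_id
  have h3 := (h.comp h2).const_mul ((c⁻¹ : ℝ) ^ n)
  rw [mul_zero] at h3
  refine h3.congr fun x => ?_
  simp only [Function.comp_apply]
  rw [← mul_assoc, ← mul_pow]
  congr 2
  field_simp

lemma rpow_mul_exp_decay {c : ℝ} (hc : 0 < c) (β : ℝ) :
    Tendsto (fun x : ℝ => x ^ β * Real.exp (-(c * x))) atTop (𝓝 0) := by
  refine squeeze_zero' ?_ ?_ (poly_mul_exp_decay hc ⌈β⌉₊)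
  · filter_upwards [eventually_ge_atTop (1:ℝ)] with x hx
    have : (0:ℝ) < x := lt_of_lt_of_le one_pos hx
    positivity
  · filter_upwards [eventually_ge_atTop (1:ℝ)] with x hx
    have hx0 : (0:ℝ) < x := lt_of_lt_of_le one_pos hx
    have h1 : x ^ β ≤ x ^ (⌈β⌉₊ : ℝ) :=
      Real.rpow_le_rpow_of_exponent_le hx (Nat.le_ceil β)
    rw [Real.rpow_natCast] at h1
    exact mul_le_mul_of_nonneg_right h1 (Real.exp_nonneg _)

lemma pg_step_le {j : ℕ} {t : ℝ} (ht : ((j : ℝ) + 1) ≤ t) : pg j t ≤ pg (j + 1) t := by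
  have ht0 : (0:ℝ) < t := lt_of_lt_of_le (by positivity) ht
  unfold pg
  rw [div_le_div_iff₀ (by positivity) (by positivity)]
  have hfac : (Nat.factorial (j + 1) : ℝ) = ((j:ℝ) + 1) * Nat.factorial j := by
    push_cast [Nat.factorial_succ]; ring
  rw [hfac, pow_succ]
  have h1 : (0:ℝ) ≤ Real.exp (-t) * t ^ j * (Nat.factorial j : ℝ) := by positivity
  nlinarith [h1, pow_nonneg ht0.le j, Real.exp_pos (-t), (Nat.cast_pos (α := ℝ)).2 (Nat.factorial_pos j)]

lemma pg_le_pg {k m : ℕ} {t : ℝ} (hkm : k ≤ m) (ht : (m : ℝ) ≤ t) : pg k t ≤ pg m t := by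
  induction m, hkm using Nat.le_induction with
  | base => exact le_refl _
  | succ j hkj ih =>
    have hjt : (j : ℝ) ≤ t := le_trans (by push_cast; linarith) ht
    exact (ih hjt).trans (pg_step_le (by push_cast at ht ⊢; linarith))

lemma pS_le_card_mul {m : ℕ} {t : ℝ} (ht : (m : ℝ) ≤ t) :
    pS m t ≤ ((m : ℝ) + 1) * pg m t := by
  have h := Finset.sum_le_card_nsmul (Finset.range (m+1)) (fun k => pg k t) (pg m t)
    (fun k hk => pg_le_pg (Nat.lt_succ_iff.1 (Finset.mem_range.1 hk)) ht)
  simpa [pS, Finset.card_range, nsmul_eq_mul, add_comm, add_mul, mul_comm] using h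

/-- Poisson upper tail at `u·x`, `u > 1`, tends to fill up: cdf tends to 0. -/
lemma pS_tendsto_zero {u : ℝ} (hu : 1 < u) :
    Tendsto (fun x : ℝ => pS ⌊x⌋₊ (u * x)) atTop (𝓝 0) := by
  set c : ℝ := u - 1 - Real.log u with hc
  have hcpos : 0 < c := by
    have := Real.log_lt_sub_one_of_pos (by linarith : (0:ℝ) < u) (by linarith : u ≠ 1)
    simp only [hc]; linarith
  have hbnd : Tendsto (fun x : ℝ => (x + 1) * Real.exp (-(c * x))) atTop (𝓝 0) := by
    have h := (poly_mul_exp_decay hcpos 1).add (poly_mul_exp_decay hcpos 0)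
    rw [add_zero] at h
    exact h.congr fun x => by ring
  refine squeeze_zero' ?_ ?_ hbnd
  · filter_upwards [eventually_ge_atTop (1:ℝ)] with x hx
    have hx0 : (0:ℝ) ≤ u * x := by nlinarith
    exact Finset.sum_nonneg fun k _ => pg_nonneg hx0
  · filter_upwards [eventually_ge_atTop (1:ℝ)] with x hx
    set m : ℕ := ⌊x⌋₊ with hm
    have hx0 : (0:ℝ) < x := lt_of_lt_of_le one_pos hx
    have hm1 : 1 ≤ m := Nat.le_floor (by exact_mod_cast hx)
    have hmx : (m : ℝ) ≤ x := Nat.floor_le hx0.le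
    have hxm : x < (m : ℝ) + 1 := Nat.lt_floor_add_one x
    have hmpos : (0:ℝ) < m := by exact_mod_cast hm1
    have ht0 : (0:ℝ) < u * x := by nlinarith
    have hmt : (m : ℝ) ≤ u * x := by nlinarith
    have h1 : pS m (u * x) ≤ ((m:ℝ) + 1) * pg m (u * x) := pS_le_card_mul hmt
    have h2 : pg m (u * x) ≤ Real.exp ((m : ℝ) * (1 + Real.log (u * x / m)) - u * x) :=
      pg_le_exp_bound hm1 ht0
    have hlogu : 0 ≤ Real.log u := Real.log_nonneg hu.le
    have h3 : (m : ℝ) * (1 + Real.log (u * x / m)) - u * x ≤ -(c * x) := by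
      have hxm0 : (0:ℝ) < x / m := by positivity
      have hlog : Real.log (u * x / m) = Real.log u + Real.log (x / m) := by
        rw [mul_div_assoc, Real.log_mul (by linarith) (ne_of_gt hxm0)]
      have hlog2 : Real.log (x / m) ≤ x / m - 1 := Real.log_le_sub_one_of_pos hxm0
      have h4 : (m : ℝ) * (1 + Real.log (u * x / m)) ≤ (m:ℝ) * Real.log u + x := by
        rw [hlog]
        have : (m:ℝ) * (1 + (Real.log u + Real.log (x/m))) ≤ (m:ℝ) * (Real.log u + x / m) := by
          have := mul_le_mul_of_nonneg_left hlog2 hmpos.le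
          nlinarith
        calc (m : ℝ) * (1 + (Real.log u + Real.log (x/m))) ≤ (m:ℝ) * (Real.log u + x / m) := this
          _ = (m:ℝ) * Real.log u + x := by field_simp
      have h5 : (m:ℝ) * Real.log u ≤ x * Real.log u := mul_le_mul_of_nonneg_right hmx hlogu
      simp only [hc]; nlinarith
    calc pS m (u * x) ≤ ((m:ℝ) + 1) * pg m (u * x) := h1
      _ ≤ ((m:ℝ) + 1) * Real.exp ((m : ℝ) * (1 + Real.log (u * x / m)) - u * x) := by
          exact mul_le_mul_of_nonneg_left h2 (by positivity)
      _ ≤ (x + 1) * Real.exp (-(c * x)) := by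
          have := Real.exp_le_exp.2 h3
          have hpg : (0:ℝ) ≤ Real.exp ((m : ℝ) * (1 + Real.log (u * x / m)) - u * x) :=
            Real.exp_nonneg _
          nlinarith [Real.exp_nonneg (-(c*x))]

lemma one_sub_pS_le {m : ℕ} {t s : ℝ} (ht : 0 ≤ t) (hs0 : 0 < s) (hs1 : s < 1)
    (hts : t ≤ s * ((m : ℝ) + 1)) :
    1 - pS m t ≤ (1 - s)⁻¹ * (Real.exp (-t) * t ^ (m + 1) / (Nat.factorial (m + 1) : ℝ)) := by
  have hsum : Summable (fun k : ℕ => t ^ k / (Nat.factorial k : ℝ)) :=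
    Real.summable_pow_div_factorial t
  have hexp : Real.exp t = ∑' k : ℕ, t ^ k / (Nat.factorial k : ℝ) := by
    rw [Real.exp_eq_exp_ℝ, NormedSpace.exp_eq_tsum_div]
  have hterm : ∀ k : ℕ, t ^ (k + (m + 1)) / (Nat.factorial (k + (m + 1)) : ℝ)
      ≤ (t ^ (m + 1) / (Nat.factorial (m + 1) : ℝ)) * s ^ k := by
    intro k
    have hfac : ((Nat.factorial (m + 1) : ℝ) * ((m : ℝ) + 2) ^ k)
        ≤ (Nat.factorial (k + (m + 1)) : ℝ) := by
      have h := Nat.factorial_mul_pow_le_factorial (m := m + 1) (n := k)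
      rw [Nat.add_comm (m + 1) k] at h
      calc ((Nat.factorial (m + 1) : ℝ) * ((m : ℝ) + 2) ^ k)
          = ((Nat.factorial (m + 1) * (m + 1 + 1) ^ k : ℕ) : ℝ) := by push_cast; ring
        _ ≤ _ := by exact_mod_cast h
    have hstep1 : t ^ (k + (m + 1)) / (Nat.factorial (k + (m + 1)) : ℝ)
        ≤ t ^ (k + (m + 1)) / ((Nat.factorial (m + 1) : ℝ) * ((m : ℝ) + 2) ^ k) := by
      gcongr
    refine hstep1.trans ?_
    have heq : t ^ (k + (m + 1)) / ((Nat.factorial (m + 1) : ℝ) * ((m : ℝ) + 2) ^ k)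
        = (t ^ (m + 1) / (Nat.factorial (m + 1) : ℝ)) * (t / ((m : ℝ) + 2)) ^ k := by
      rw [pow_add, div_pow, div_mul_div_comm]
      ring
    rw [heq]
    have hts2 : t / ((m : ℝ) + 2) ≤ s := by
      rw [div_le_iff₀ (by positivity)]
      nlinarith
    have := pow_le_pow_left₀ (by positivity : (0:ℝ) ≤ t / ((m:ℝ) + 2)) hts2 k
    exact mul_le_mul_of_nonneg_left this (by positivity)
  have hl : Summable (fun k : ℕ => t ^ (k + (m + 1)) / (Nat.factorial (k + (m + 1)) : ℝ)) :=
    (summable_nat_add_iff (m + 1)).2 hsum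
  have hgeo : Summable (fun k : ℕ => (t ^ (m + 1) / (Nat.factorial (m + 1) : ℝ)) * s ^ k) :=
    (summable_geometric_of_lt_one hs0.le hs1).mul_left _
  have htail : (∑' k : ℕ, t ^ (k + (m + 1)) / (Nat.factorial (k + (m + 1)) : ℝ))
      ≤ (t ^ (m + 1) / (Nat.factorial (m + 1) : ℝ)) * (1 - s)⁻¹ := by
    calc (∑' k : ℕ, t ^ (k + (m + 1)) / (Nat.factorial (k + (m + 1)) : ℝ))
        ≤ ∑' k : ℕ, (t ^ (m + 1) / (Nat.factorial (m + 1) : ℝ)) * s ^ k :=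
          Summable.tsum_le_tsum hterm hl hgeo
      _ = (t ^ (m + 1) / (Nat.factorial (m + 1) : ℝ)) * (1 - s)⁻¹ := by
          rw [tsum_mul_left, tsum_geometric_of_lt_one hs0.le hs1]
  have hsplit := Summable.sum_add_tsum_nat_add (f := fun k => t ^ k / (Nat.factorial k : ℝ)) (m + 1) hsum
  have hps : pS m t = Real.exp (-t) * ∑ k ∈ Finset.range (m + 1), t ^ k / (Nat.factorial k : ℝ) := by
    rw [Finset.mul_sum]
    exact Finset.sum_congr rfl fun k _ => by unfold pg; ring
  have h1 : 1 - pS m t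
      = Real.exp (-t) * (∑' k : ℕ, t ^ (k + (m + 1)) / (Nat.factorial (k + (m + 1)) : ℝ)) := by
    have he : Real.exp (-t) * Real.exp t = 1 := by rw [← Real.exp_add]; simp
    have h2 : (∑' k : ℕ, t ^ (k + (m + 1)) / (Nat.factorial (k + (m + 1)) : ℝ))
        = Real.exp t - ∑ k ∈ Finset.range (m + 1), t ^ k / (Nat.factorial k : ℝ) := by
      rw [hexp]; linarith [hsplit]
    rw [h2, hps, mul_sub, he]
  rw [h1]
  calc Real.exp (-t) * (∑' k : ℕ, t ^ (k + (m + 1)) / (Nat.factorial (k + (m + 1)) : ℝ))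
      ≤ Real.exp (-t) * ((t ^ (m + 1) / (Nat.factorial (m + 1) : ℝ)) * (1 - s)⁻¹) :=
        mul_le_mul_of_nonneg_left htail (Real.exp_nonneg _)
    _ = (1 - s)⁻¹ * (Real.exp (-t) * t ^ (m + 1) / (Nat.factorial (m + 1) : ℝ)) := by ring

/-- Poisson upper tail at `s·x`, `s < 1`, decays faster than any power. -/
lemma one_sub_pS_decay {s : ℝ} (hs0 : 0 < s) (hs1 : s < 1) (β : ℝ) :
    Tendsto (fun x : ℝ => x ^ β * (1 - pS ⌊x⌋₊ (s * x))) atTop (𝓝 0) := by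
  set c : ℝ := s - 1 - Real.log s with hc
  have hcpos : 0 < c := by
    have := Real.log_lt_sub_one_of_pos hs0 (ne_of_lt hs1)
    simp only [hc]; linarith
  have hbnd : Tendsto (fun x : ℝ => ((1 - s)⁻¹ * Real.exp 1) * (x ^ β * Real.exp (-(c * x))))
      atTop (𝓝 0) := by
    have := (rpow_mul_exp_decay hcpos β).const_mul ((1 - s)⁻¹ * Real.exp 1)
    simpa using this
  refine squeeze_zero' ?_ ?_ hbnd
  · filter_upwards [eventually_ge_atTop (1:ℝ)] with x hx
    have hx0 : (0:ℝ) < x := lt_of_lt_of_le one_pos hx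
    have h1 : pS ⌊x⌋₊ (s * x) ≤ 1 := pS_le_one (by positivity)
    have h2 : (0:ℝ) ≤ x ^ β := Real.rpow_nonneg hx0.le β
    nlinarith
  · filter_upwards [eventually_ge_atTop (1:ℝ)] with x hx
    set m : ℕ := ⌊x⌋₊ with hm
    have hx0 : (0:ℝ) < x := lt_of_lt_of_le one_pos hx
    have hmx : (m : ℝ) ≤ x := Nat.floor_le hx0.le
    have hxm : x < (m : ℝ) + 1 := Nat.lt_floor_add_one x
    have ht0 : (0:ℝ) < s * x := by positivity
    have hts : s * x ≤ s * ((m : ℝ) + 1) := by nlinarith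
    have h1 := one_sub_pS_le (t := s * x) ht0.le hs0 hs1 hts
    have h2 : Real.exp (-(s*x)) * (s*x) ^ (m + 1) / (Nat.factorial (m + 1) : ℝ)
        ≤ Real.exp (((m:ℝ) + 1) * (1 + Real.log (s * x / ((m:ℝ) + 1))) - s * x) := by
      have := pg_le_exp_bound (k := m + 1) (Nat.le_add_left 1 m) ht0
      simpa [Nat.cast_add, Nat.cast_one] using this
    have hlogs : Real.log s < 0 := Real.log_neg hs0 hs1
    have h3 : ((m:ℝ) + 1) * (1 + Real.log (s * x / ((m:ℝ) + 1))) - s * x ≤ 1 + -(c * x) := by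
      have hq0 : (0:ℝ) < s * x / ((m:ℝ) + 1) := by positivity
      have hqs : s * x / ((m:ℝ) + 1) ≤ s := by
        rw [div_le_iff₀ (by positivity)]
        nlinarith
      have hlog : Real.log (s * x / ((m:ℝ) + 1)) ≤ Real.log s := Real.log_le_log hq0 hqs
      have h4 : ((m:ℝ) + 1) * (1 + Real.log (s * x / ((m:ℝ) + 1)))
          ≤ ((m:ℝ) + 1) * (1 + Real.log s) := by
        have : (1 + Real.log (s * x / ((m:ℝ) + 1))) ≤ (1 + Real.log s) := by linarith
        exact mul_le_mul_of_nonneg_left this (by positivity)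
      have h5 : ((m:ℝ) + 1) * (1 + Real.log s) ≤ x * (1 + Real.log s) + 1 := by
        rcases le_or_gt 0 (1 + Real.log s) with hA | hA
        · nlinarith
        · nlinarith
      simp only [hc]; nlinarith
    have hexpmono := Real.exp_le_exp.2 h3
    have hfin : 1 - pS m (s * x)
        ≤ (1 - s)⁻¹ * (Real.exp 1 * Real.exp (-(c * x))) := by
      rw [← Real.exp_add]
      refine h1.trans ?_
      have hpos : (0:ℝ) ≤ (1 - s)⁻¹ := by
        have : (0:ℝ) < 1 - s := by linarith
        positivity
      exact mul_le_mul_of_nonneg_left (h2.trans hexpmono) hpos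
    have hx2 : (0:ℝ) ≤ x ^ β := Real.rpow_nonneg hx0.le β
    calc x ^ β * (1 - pS m (s * x))
        ≤ x ^ β * ((1 - s)⁻¹ * (Real.exp 1 * Real.exp (-(c * x)))) :=
          mul_le_mul_of_nonneg_left hfin hx2
      _ = ((1 - s)⁻¹ * Real.exp 1) * (x ^ β * Real.exp (-(c * x))) := by ring

section Rep
variable {Ω : Type*} [MeasureSpace Ω] [IsProbabilityMeasure (ℙ : Measure Ω)]

lemma continuous_pg (k : ℕ) : Continuous (pg k) := by
  unfold pg
  exact ((Real.continuous_exp.comp continuous_neg).mul (continuous_pow k)).div_const _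

lemma pg_integrable (T : Ω → ℝ) (hT : Measurable T) (hT0 : ∀ ω, 0 ≤ T ω) (k : ℕ) :
    Integrable (fun ω => pg k (T ω)) ℙ := by
  refine (integrable_const (1:ℝ)).mono' ?_ ?_
  · exact ((continuous_pg k).measurable.comp hT).aestronglyMeasurable
  · refine ae_of_all _ fun ω => ?_
    rw [Real.norm_eq_abs, abs_of_nonneg (pg_nonneg (hT0 ω))]
    exact pg_le_one (hT0 ω)

lemma pS_integrable (T : Ω → ℝ) (hT : Measurable T) (hT0 : ∀ ω, 0 ≤ T ω) (m : ℕ) :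
    Integrable (fun ω => pS m (T ω)) ℙ := by
  have : (fun ω => pS m (T ω)) = fun ω => ∑ k ∈ Finset.range (m + 1), pg k (T ω) := by
    funext ω; simp [pS]
  rw [this]
  exact integrable_finset_sum _ fun k _ => pg_integrable T hT hT0 k

lemma tail_antitone (f : Ω → ℝ) : Antitone (fun x => (ℙ {ω | f ω > x}).toReal) := by
  intro a b hab
  refine ENNReal.toReal_mono (measure_ne_top _ _) (measure_mono fun ω h => ?_)
  exact lt_of_le_of_lt hab h

lemma tail_rep (T : Ω → ℝ) (hT : Measurable T) (hT0 : ∀ ω, 0 ≤ T ω)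
    (N : Ω → ℕ) (hN : Measurable N)
    (hmix : ∀ k : ℕ, (ℙ {ω | N ω = k}).toReal =
      ∫ ω, Real.exp (-(T ω)) * (T ω) ^ k / (Nat.factorial k : ℝ) ∂ℙ) : ∀ x : ℝ, 0 ≤ x →
    (ℙ {ω | (N ω : ℝ) > x}).toReal = ∫ ω, (1 - pS ⌊x⌋₊ (T ω)) ∂ℙ := by
  have hcdf : ∀ m : ℕ, (ℙ {ω | N ω ≤ m}).toReal = ∫ ω, pS m (T ω) ∂ℙ := by
    intro m
    have hset : {ω | N ω ≤ m} = ⋃ k ∈ Finset.range (m + 1), {ω | N ω = k} := by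
      ext ω; simp [Nat.lt_succ_iff]
    have hdisj : (↑(Finset.range (m + 1)) : Set ℕ).PairwiseDisjoint
        (fun k => {ω | N ω = k}) := by
      intro i _ j _ hij
      refine Set.disjoint_left.2 fun ω h1 h2 => hij ?_
      exact h1.symm.trans h2
    rw [hset, measure_biUnion_finset hdisj (fun k _ => hN (measurableSet_singleton k)),
      ENNReal.toReal_sum (fun k _ => measure_ne_top _ _)]
    have h1 : ∀ k ∈ Finset.range (m + 1),
        (ℙ {ω | N ω = k}).toReal = ∫ ω, pg k (T ω) ∂ℙ := by
      intro k _
      rw [hmix k]; rfl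
    rw [Finset.sum_congr rfl h1, ← integral_finset_sum _ fun k _ => pg_integrable T hT hT0 k]
    rfl
  intro x hx
  have hset2 : {ω | (N ω : ℝ) > x} = {ω | N ω ≤ ⌊x⌋₊}ᶜ := by
    ext ω
    simp only [Set.mem_setOf_eq, Set.mem_compl_iff, not_le, gt_iff_lt]
    exact ⟨fun h => (Nat.floor_lt hx).2 h, fun h => (Nat.floor_lt hx).1 h⟩
  have hmeasA : MeasurableSet {ω | N ω ≤ ⌊x⌋₊} := hN measurableSet_Iic
  rw [hset2, measure_compl hmeasA (measure_ne_top _ _), measure_univ,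
    ENNReal.toReal_sub_of_le prob_le_one ENNReal.one_ne_top, ENNReal.toReal_one,
    hcdf ⌊x⌋₊, integral_sub (integrable_const 1) (pS_integrable T hT hT0 ⌊x⌋₊)]
  simp

lemma sandwich_ge (T : Ω → ℝ) (hT : Measurable T) (hT0 : ∀ ω, 0 ≤ T ω)
    (N : Ω → ℕ) (hN : Measurable N)
    (hmix : ∀ k : ℕ, (ℙ {ω | N ω = k}).toReal =
      ∫ ω, Real.exp (-(T ω)) * (T ω) ^ k / (Nat.factorial k : ℝ) ∂ℙ) (x v : ℝ) (hx : 0 ≤ x) (hv : 0 ≤ v) :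
    (1 - pS ⌊x⌋₊ v) * (ℙ {ω | T ω > v}).toReal ≤ (ℙ {ω | (N ω : ℝ) > x}).toReal := by
  rw [tail_rep T hT hT0 N hN hmix x hx]
  have hA : MeasurableSet {ω | T ω > v} := hT measurableSet_Ioi
  have hind : ∀ ω, Set.indicator {ω | T ω > v} (fun _ => 1 - pS ⌊x⌋₊ v) ω
      ≤ 1 - pS ⌊x⌋₊ (T ω) := by
    intro ω
    by_cases hω : ω ∈ {ω | T ω > v}
    · rw [Set.indicator_of_mem hω]
      have := pS_anti ⌊x⌋₊ hv (le_of_lt hω)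
      linarith
    · rw [Set.indicator_of_notMem hω]
      have := pS_le_one (m := ⌊x⌋₊) (hT0 ω)
      linarith
  have hf : Integrable (fun ω => Set.indicator {ω | T ω > v} (fun _ => 1 - pS ⌊x⌋₊ v) ω) ℙ :=
    (integrable_const (1 - pS ⌊x⌋₊ v)).indicator hA
  have hg : Integrable (fun ω => 1 - pS ⌊x⌋₊ (T ω)) ℙ := by
    exact (integrable_const (1:ℝ)).sub (pS_integrable T hT hT0 ⌊x⌋₊)
  have h := integral_mono hf hg hind
  rw [integral_indicator_const _ hA, smul_eq_mul] at h
  calc (1 - pS ⌊x⌋₊ v) * (ℙ {ω | T ω > v}).toReal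
      = (ℙ {ω | T ω > v}).toReal * (1 - pS ⌊x⌋₊ v) := by ring
    _ ≤ _ := h

lemma sandwich_le (T : Ω → ℝ) (hT : Measurable T) (hT0 : ∀ ω, 0 ≤ T ω)
    (N : Ω → ℕ) (hN : Measurable N)
    (hmix : ∀ k : ℕ, (ℙ {ω | N ω = k}).toReal =
      ∫ ω, Real.exp (-(T ω)) * (T ω) ^ k / (Nat.factorial k : ℝ) ∂ℙ) (x v : ℝ) (hx : 0 ≤ x) (hv : 0 ≤ v) :
    (ℙ {ω | (N ω : ℝ) > x}).toReal
      ≤ (ℙ {ω | T ω > v}).toReal + (1 - pS ⌊x⌋₊ v) := by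
  rw [tail_rep T hT hT0 N hN hmix x hx]
  have hA : MeasurableSet {ω | T ω > v} := hT measurableSet_Ioi
  have hind : ∀ ω, 1 - pS ⌊x⌋₊ (T ω)
      ≤ Set.indicator {ω | T ω > v} (fun _ => (1:ℝ)) ω + (1 - pS ⌊x⌋₊ v) := by
    intro ω
    by_cases hω : ω ∈ {ω | T ω > v}
    · rw [Set.indicator_of_mem hω]
      have h1 := pS_nonneg (m := ⌊x⌋₊) (hT0 ω)
      have h2 := pS_le_one (m := ⌊x⌋₊) hv
      linarith
    · rw [Set.indicator_of_notMem hω]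
      have h3 : T ω ≤ v := le_of_not_gt hω
      have := pS_anti ⌊x⌋₊ (hT0 ω) h3
      linarith
  have hf : Integrable (fun ω => 1 - pS ⌊x⌋₊ (T ω)) ℙ := by
    exact (integrable_const (1:ℝ)).sub (pS_integrable T hT hT0 ⌊x⌋₊)
  have hi : Integrable (fun ω => Set.indicator {ω | T ω > v} (fun _ => (1:ℝ)) ω) ℙ :=
    (integrable_const (1:ℝ)).indicator hA
  have hg : Integrable
      (fun ω => Set.indicator {ω | T ω > v} (fun _ => (1:ℝ)) ω + (1 - pS ⌊x⌋₊ v)) ℙ :=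
    hi.add (integrable_const _)
  have h := integral_mono hf hg hind
  rw [integral_add hi (integrable_const _), integral_indicator_const _ hA, smul_eq_mul,
    mul_one, integral_const, probReal_univ, one_smul] at h
  exact h
end Rep

lemma tendsto_W_ratio {α : ℝ} (L : ℝ → ℝ) (hLpos : ∀ x > 0, 0 < L x)
    (hL : ∀ t > 0, Tendsto (fun x => L (t * x) / L x) atTop (𝓝 1)) {u : ℝ} (hu : 0 < u) :
    Tendsto (fun x : ℝ => ((u * x) ^ (-α) * L (u * x)) / (x ^ (-α) * L x)) atTop
      (𝓝 (u ^ (-α))) := by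
  have h1 := (hL u hu).const_mul (u ^ (-α) : ℝ)
  rw [mul_one] at h1
  refine Tendsto.congr' ?_ h1
  filter_upwards [eventually_gt_atTop (0:ℝ)] with x hx
  have hux : 0 < u * x := by positivity
  have hL1 : L x ≠ 0 := ne_of_gt (hLpos x hx)
  have hL2 : L (u * x) ≠ 0 := ne_of_gt (hLpos _ hux)
  have hx0 : (x : ℝ) ^ (-α) ≠ 0 := ne_of_gt (Real.rpow_pos_of_pos hx _)
  have hu0 : (u : ℝ) ^ (-α) ≠ 0 := ne_of_gt (Real.rpow_pos_of_pos hu _)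
  rw [Real.mul_rpow hu.le hx.le]
  field_simp

lemma tendsto_W_ratio_inv {α : ℝ} (L : ℝ → ℝ) (hLpos : ∀ x > 0, 0 < L x)
    (hL : ∀ t > 0, Tendsto (fun x => L (t * x) / L x) atTop (𝓝 1)) {u : ℝ} (hu : 0 < u) :
    Tendsto (fun x : ℝ => (x ^ (-α) * L x) / ((u * x) ^ (-α) * L (u * x))) atTop
      (𝓝 (u ^ α)) := by
  have h := (tendsto_W_ratio L hLpos hL hu (α := α)).inv₀
    (ne_of_gt (Real.rpow_pos_of_pos hu _))
  have h2 : ((u:ℝ) ^ (-α))⁻¹ = u ^ α := by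
    rw [Real.rpow_neg hu.le, inv_inv]
  rw [h2] at h
  exact h.congr fun x => by rw [inv_div]

lemma W_lb {α : ℝ} (hα : 0 < α) (L : ℝ → ℝ) (hLpos : ∀ x > 0, 0 < L x)
    (hL2 : Tendsto (fun x => L (2 * x) / L x) atTop (𝓝 1)) (f : ℝ → ℝ) (hanti : Antitone f)
    (hfW : Tendsto (fun x => f x / (x ^ (-α) * L x)) atTop (𝓝 1)) :
    ∃ c > 0, ∀ᶠ x : ℝ in atTop, c * x ^ (-(α + 1)) ≤ x ^ (-α) * L x := by
  set W : ℝ → ℝ := fun x => x ^ (-α) * L x with hW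
  have hWpos : ∀ x : ℝ, 0 < x → 0 < W x := fun x hx =>
    mul_pos (Real.rpow_pos_of_pos hx _) (hLpos x hx)
  have h1 := hfW.eventually_const_lt (show (1:ℝ)/2 < 1 by norm_num)
  have h2 := hfW.eventually_lt_const (show (1:ℝ) < 2 by norm_num)
  have h3 := hL2.eventually_const_lt (show (1:ℝ)/2 < 1 by norm_num)
  obtain ⟨x0, hx0⟩ := eventually_atTop.1 ((h1.and (h2.and h3)).and (eventually_ge_atTop (1:ℝ)))
  have hx01 : (1:ℝ) ≤ x0 := (hx0 x0 le_rfl).2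
  have hx0pos : (0:ℝ) < x0 := lt_of_lt_of_le one_pos hx01
  -- basic consequences
  have hfub : ∀ x, x0 ≤ x → f x ≤ 2 * W x := by
    intro x hx
    have hWx := hWpos x (lt_of_lt_of_le hx0pos hx)
    have := (hx0 x hx).1.2.1
    rw [div_lt_iff₀ hWx] at this
    linarith
  have hflb : ∀ x, x0 ≤ x → W x / 2 ≤ f x := by
    intro x hx
    have hWx := hWpos x (lt_of_lt_of_le hx0pos hx)
    have := (hx0 x hx).1.1
    rw [lt_div_iff₀ hWx] at this
    linarith
  have hWstep : ∀ y, x0 ≤ y → (2:ℝ) ^ (-(α + 1)) * W y ≤ W (2 * y) := by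
    intro y hy
    have hypos : (0:ℝ) < y := lt_of_lt_of_le hx0pos hy
    have hLy := hLpos y hypos
    have h4 := (hx0 y hy).1.2.2
    rw [lt_div_iff₀ hLy] at h4
    have h5 : (2 * y) ^ (-α) = (2:ℝ) ^ (-α) * y ^ (-α) :=
      Real.mul_rpow (by norm_num) hypos.le
    have h6 : ((2:ℝ) ^ (-(α + 1)) : ℝ) = (2:ℝ) ^ (-α) * 2⁻¹ := by
      rw [show -(α + 1) = -α + (-1) by ring, Real.rpow_add two_pos, Real.rpow_neg_one]
    have hy2 : (0:ℝ) < y ^ (-α) := Real.rpow_pos_of_pos hypos _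
    have h7 : (0:ℝ) < (2:ℝ) ^ (-α) := Real.rpow_pos_of_pos two_pos _
    simp only [hW, h5, h6]
    calc (2:ℝ) ^ (-α) * 2⁻¹ * (y ^ (-α) * L y)
        = (2:ℝ) ^ (-α) * y ^ (-α) * (L y / 2) := by ring
      _ ≤ (2:ℝ) ^ (-α) * y ^ (-α) * L (2 * y) := by
          have : L y / 2 ≤ L (2 * y) := by linarith
          exact mul_le_mul_of_nonneg_left this (by positivity)
      _ = (2:ℝ) ^ (-α) * y ^ (-α) * L (2 * y) := rfl
  have hWx0 : 0 < W x0 := hWpos x0 hx0pos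
  -- dyadic claim
  have claim : ∀ n : ℕ, ∀ x : ℝ, x0 ≤ x → x ≤ 2 ^ (n + 1) * x0 →
      (2:ℝ) ^ (-(α + 1) * ((n:ℝ) + 1)) * W x0 / 4 ≤ W x := by
    intro n
    induction n with
    | zero =>
      intro x hx1 hx2
      have h2x0 : x0 ≤ 2 * x0 := by linarith
      have hfx : f x ≥ f (2 * x0) := by
        apply hanti
        simpa using hx2
      have hf2 : W (2 * x0) / 2 ≤ f (2 * x0) := hflb _ h2x0
      have hst := hWstep x0 le_rfl
      have hub := hfub x hx1
      have : (2:ℝ) ^ (-(α + 1) * ((0:ℕ) + 1 : ℝ)) = (2:ℝ) ^ (-(α + 1)) := by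
        norm_num
      rw [this]
      linarith
    | succ n ih =>
      intro x hx1 hx2
      have hexp : (2:ℝ) ^ (-(α + 1) * (((n:ℕ) + 1 : ℕ) + 1 : ℝ))
          = (2:ℝ) ^ (-(α + 1)) * (2:ℝ) ^ (-(α + 1) * ((n:ℝ) + 1)) := by
        rw [← Real.rpow_add two_pos]
        congr 1
        push_cast
        ring
      rcases le_or_gt x (2 ^ (n + 1) * x0) with hle | hlt
      · have := ih x hx1 hle
        have hmono : (2:ℝ) ^ (-(α + 1) * (((n:ℕ) + 1 : ℕ) + 1 : ℝ))
            ≤ (2:ℝ) ^ (-(α + 1) * ((n:ℝ) + 1)) := by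
          apply Real.rpow_le_rpow_of_exponent_le one_le_two
          push_cast
          nlinarith
        have h8 : (2:ℝ) ^ (-(α + 1) * (((n:ℕ) + 1 : ℕ) + 1 : ℝ)) * W x0 / 4
            ≤ (2:ℝ) ^ (-(α + 1) * ((n:ℝ) + 1)) * W x0 / 4 := by
          have := mul_le_mul_of_nonneg_right hmono hWx0.le
          linarith
        linarith
      · have hx2' : x / 2 ≤ 2 ^ (n + 1) * x0 := by
          rw [div_le_iff₀ (by norm_num : (0:ℝ) < 2)]
          calc x ≤ 2 ^ (n + 1 + 1) * x0 := hx2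
            _ = 2 ^ (n + 1) * x0 * 2 := by ring
        have hx1' : x0 ≤ x / 2 := by
          have h2n : (2:ℝ) ≤ 2 ^ (n + 1) := by
            calc (2:ℝ) = 2 ^ 1 := (pow_one 2).symm
              _ ≤ 2 ^ (n + 1) := by
                  apply pow_le_pow_right₀ one_le_two
                  omega
          rw [le_div_iff₀ (by norm_num : (0:ℝ) < 2)]
          nlinarith [mul_le_mul_of_nonneg_right h2n hx0pos.le]
        have hih := ih (x / 2) hx1' hx2'
        have hst := hWstep (x / 2) hx1'
        rw [show 2 * (x / 2) = x by ring] at hst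
        rw [hexp]
        calc (2:ℝ) ^ (-(α + 1)) * (2:ℝ) ^ (-(α + 1) * ((n:ℝ) + 1)) * W x0 / 4
            = (2:ℝ) ^ (-(α + 1)) * ((2:ℝ) ^ (-(α + 1) * ((n:ℝ) + 1)) * W x0 / 4) := by ring
          _ ≤ (2:ℝ) ^ (-(α + 1)) * W (x / 2) := by
              exact mul_le_mul_of_nonneg_left hih (Real.rpow_pos_of_pos two_pos _).le
          _ ≤ W x := hst
  -- conclude
  refine ⟨(2 / x0) ^ (-(α + 1)) * W x0 / 4, by positivity, ?_⟩
  filter_upwards [eventually_ge_atTop (2 * x0)] with x hx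
  have hxx0 : x0 ≤ x := by linarith
  have hxpos : 0 < x := lt_of_lt_of_le hx0pos hxx0
  have hratio : (2:ℝ) ≤ x / x0 := by
    rw [le_div_iff₀ hx0pos]; linarith
  have hrpos : (0:ℝ) < x / x0 := by positivity
  set n : ℕ := ⌊Real.logb 2 (x / x0)⌋₊ with hn
  have hlogb_nonneg : 0 ≤ Real.logb 2 (x / x0) := by
    apply Real.logb_nonneg one_lt_two
    linarith
  have hn1 : (n:ℝ) ≤ Real.logb 2 (x / x0) := Nat.floor_le hlogb_nonneg
  have hn2 : Real.logb 2 (x / x0) < (n:ℝ) + 1 := Nat.lt_floor_add_one _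
  have hpow1 : (2:ℝ) ^ (n:ℝ) ≤ x / x0 := by
    calc (2:ℝ) ^ (n:ℝ) ≤ (2:ℝ) ^ Real.logb 2 (x / x0) :=
          Real.rpow_le_rpow_of_exponent_le one_le_two hn1
      _ = x / x0 := Real.rpow_logb two_pos (by norm_num) hrpos
  have hpow2 : x / x0 ≤ (2:ℝ) ^ ((n:ℝ) + 1) := by
    calc x / x0 = (2:ℝ) ^ Real.logb 2 (x / x0) :=
          (Real.rpow_logb two_pos (by norm_num) hrpos).symm
      _ ≤ (2:ℝ) ^ ((n:ℝ) + 1) := Real.rpow_le_rpow_of_exponent_le one_le_two hn2.le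
  have hxle : x ≤ 2 ^ (n + 1) * x0 := by
    have heq : (2:ℝ) ^ ((n:ℝ) + 1) = (2:ℝ) ^ (n + 1 : ℕ) := by
      rw [← Real.rpow_natCast 2 (n + 1)]
      push_cast; ring_nf
    rw [div_le_iff₀ hx0pos, heq] at hpow2
    linarith
  have hcl := claim n x hxx0 hxle
  -- compare 2^(-(α+1)(n+1)) with x-power
  have hkey : ((2:ℝ) / x0) ^ (-(α + 1)) * x ^ (-(α + 1))
      ≤ (2:ℝ) ^ (-(α + 1) * ((n:ℝ) + 1)) := by
    have e1 : (2:ℝ) ^ (-(α + 1) * ((n:ℝ) + 1)) = ((2:ℝ) ^ ((n:ℝ) + 1)) ^ (-(α + 1)) := by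
      rw [← Real.rpow_mul (by norm_num : (0:ℝ) ≤ 2)]
      congr 1; ring
    have e2 : ((2:ℝ) / x0) ^ (-(α + 1)) * x ^ (-(α + 1)) = (2 / x0 * x) ^ (-(α + 1)) := by
      rw [Real.mul_rpow (by positivity) hxpos.le]
    have hle2 : (2:ℝ) ^ ((n:ℝ) + 1) ≤ 2 / x0 * x := by
      have h2n : (2:ℝ) ^ ((n:ℝ) + 1) = 2 * (2:ℝ) ^ (n:ℝ) := by
        rw [Real.rpow_add two_pos, Real.rpow_one]; ring
      rw [h2n]
      have := mul_le_mul_of_nonneg_left hpow1 (by norm_num : (0:ℝ) ≤ 2)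
      calc 2 * (2:ℝ) ^ (n:ℝ) ≤ 2 * (x / x0) := this
        _ = 2 / x0 * x := by ring
    rw [e1, e2]
    exact Real.rpow_le_rpow_of_nonpos (by positivity) hle2 (by linarith)
  calc (2 / x0) ^ (-(α + 1)) * W x0 / 4 * x ^ (-(α + 1))
      = ((2 / x0) ^ (-(α + 1)) * x ^ (-(α + 1))) * W x0 / 4 := by ring
    _ ≤ (2:ℝ) ^ (-(α + 1) * ((n:ℝ) + 1)) * W x0 / 4 := by
        have := mul_le_mul_of_nonneg_right hkey hWx0.le
        linarith
    _ ≤ W x := hcl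

lemma exists_one_lt_and_lt_rpow_neg {α a : ℝ} (hα : 0 < α) (ha : a < 1) :
    ∃ u : ℝ, 1 < u ∧ a < u ^ (-α) := by
  rcases le_or_gt a 0 with ha0 | ha0
  · exact ⟨2, one_lt_two, lt_of_le_of_lt ha0 (Real.rpow_pos_of_pos two_pos _)⟩
  · set b := a ^ (-(1/α)) with hb
    have hb1 : 1 < b := by
      rw [hb]
      rw [Real.one_lt_rpow_iff_of_pos ha0]
      right
      constructor
      · exact ha
      · rw [neg_lt, neg_zero]; positivity
    refine ⟨(1 + b) / 2, by linarith, ?_⟩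
    have hu1 : (1:ℝ) < (1 + b) / 2 := by linarith
    have hub : (1 + b) / 2 < b := by linarith
    have hbval : b ^ (-α) = a := by
      rw [hb, ← Real.rpow_mul ha0.le]
      rw [show (-(1/α)) * (-α) = 1 by field_simp]
      exact Real.rpow_one a
    calc a = b ^ (-α) := hbval.symm
      _ < ((1 + b) / 2) ^ (-α) :=
          Real.rpow_lt_rpow_of_neg (by linarith) hub (by linarith)

lemma exists_lt_one_and_rpow_neg_lt {α a : ℝ} (hα : 0 < α) (ha : 1 < a) :
    ∃ s : ℝ, 0 < s ∧ s < 1 ∧ s ^ (-α) < a := by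
  set b := a ^ (-(1/α)) with hb
  have ha0 : (0:ℝ) < a := lt_trans one_pos ha
  have hb0 : 0 < b := Real.rpow_pos_of_pos ha0 _
  have hb1 : b < 1 := by
    rw [hb]
    apply Real.rpow_lt_one_of_one_lt_of_neg ha
    rw [neg_lt, neg_zero]; positivity
  refine ⟨(1 + b) / 2, by linarith, by linarith, ?_⟩
  have hbs : b < (1 + b) / 2 := by linarith
  have hbval : b ^ (-α) = a := by
    rw [hb, ← Real.rpow_mul ha0.le]
    rw [show (-(1/α)) * (-α) = 1 by field_simp]
    exact Real.rpow_one a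
  calc ((1 + b) / 2) ^ (-α) < b ^ (-α) :=
        Real.rpow_lt_rpow_of_neg hb0 hbs (by linarith)
    _ = a := hbval

lemma exists_lt_one_and_lt_rpow {α a : ℝ} (hα : 0 < α) (ha : a < 1) :
    ∃ s : ℝ, 0 < s ∧ s < 1 ∧ a < s ^ α := by
  rcases le_or_gt a 0 with ha0 | ha0
  · exact ⟨1/2, by norm_num, by norm_num,
      lt_of_le_of_lt ha0 (Real.rpow_pos_of_pos (by norm_num) _)⟩
  · set b := a ^ (1/α) with hb
    have hb0 : 0 < b := Real.rpow_pos_of_pos ha0 _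
    have hb1 : b < 1 := by
      rw [hb]
      apply Real.rpow_lt_one ha0.le ha
      positivity
    refine ⟨(1 + b) / 2, by linarith, by linarith, ?_⟩
    have hbs : b < (1 + b) / 2 := by linarith
    have hbval : b ^ α = a := by
      rw [hb, ← Real.rpow_mul ha0.le]
      rw [show (1/α) * α = 1 by field_simp]
      exact Real.rpow_one a
    calc a = b ^ α := hbval.symm
      _ < ((1 + b) / 2) ^ α := Real.rpow_lt_rpow hb0.le hbs hα

lemma exists_one_lt_and_rpow_lt {α a : ℝ} (hα : 0 < α) (ha : 1 < a) :
    ∃ u : ℝ, 1 < u ∧ u ^ α < a := by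
  set b := a ^ (1/α) with hb
  have ha0 : (0:ℝ) < a := lt_trans one_pos ha
  have hb1 : 1 < b := by
    rw [hb, Real.one_lt_rpow_iff_of_pos ha0]
    left
    exact ⟨ha, by positivity⟩
  refine ⟨(1 + b) / 2, by linarith, ?_⟩
  have hbs : (1 + b) / 2 < b := by linarith
  have hbval : b ^ α = a := by
    rw [hb, ← Real.rpow_mul ha0.le]
    rw [show (1/α) * α = 1 by field_simp]
    exact Real.rpow_one a
  calc ((1 + b) / 2) ^ α < b ^ α := Real.rpow_lt_rpow (by linarith) hbs hα
    _ = a := hbval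

/-- For a mixed Poisson random variable `N` with mixing random variable `T`
having finite mean, and `α ∈ (n, n+1)` non-integer with `n ≥ 1`, `L` slowly
varying: `P(T > x) ∼ x^{-α} L(x)` iff `P(N > x) ∼ x^{-α} L(x)` as `x → ∞`. -/
theorem mixedPoisson_tail_equiv
    {Ω : Type*} [MeasureSpace Ω] [IsProbabilityMeasure (ℙ : Measure Ω)]
    (T : Ω → ℝ) (hT : Measurable T) (hT0 : ∀ ω, 0 ≤ T ω)
    (hTint : Integrable T ℙ)
    (N : Ω → ℕ) (hN : Measurable N)
    (hmix : ∀ k : ℕ, (ℙ {ω | N ω = k}).toReal =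
      ∫ ω, Real.exp (-(T ω)) * (T ω) ^ k / (Nat.factorial k : ℝ) ∂ℙ)
    (α : ℝ) (n : ℕ) (hn : 1 ≤ n) (hα : α ∈ Set.Ioo (n : ℝ) (n + 1))
    (L : ℝ → ℝ) (hLpos : ∀ x > 0, 0 < L x)
    (hL : ∀ t > 0, Tendsto (fun x => L (t * x) / L x) atTop (𝓝 1)) :
    Tendsto (fun x => (ℙ {ω | T ω > x}).toReal / (x ^ (-α) * L x)) atTop (𝓝 1) ↔
      Tendsto (fun x => (ℙ {ω | (N ω : ℝ) > x}).toReal / (x ^ (-α) * L x)) atTop (𝓝 1) := by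
  have hn1 : (1:ℝ) ≤ (n : ℝ) := by exact_mod_cast hn
  have hα0 : 0 < α := by have := hα.1; linarith
  constructor
  · -- forward direction
    intro hF
    obtain ⟨c, hc, hWlb⟩ := W_lb hα0 L hLpos (hL 2 two_pos)
      (fun x => (ℙ {ω | T ω > x}).toReal) (tail_antitone T) hF
    refine tendsto_order.2 ⟨?_, ?_⟩
    · -- lower bound: a < 1
      intro a ha
      obtain ⟨u, hu1, hua⟩ := exists_one_lt_and_lt_rpow_neg hα0 ha
      have hu0 : (0:ℝ) < u := lt_trans one_pos hu1
      have hq : Tendsto (fun x : ℝ => 1 - pS ⌊x⌋₊ (u * x)) atTop (𝓝 1) := by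
        have := (pS_tendsto_zero hu1).const_sub 1
        simpa using this
      have hcomp : Tendsto (fun x : ℝ => u * x) atTop atTop :=
        Tendsto.const_mul_atTop hu0 tendsto_id
      have hFc : Tendsto (fun x : ℝ =>
          (ℙ {ω | T ω > u * x}).toReal / ((u * x) ^ (-α) * L (u * x))) atTop (𝓝 1) := by
        have := hF.comp hcomp
        exact this
      have hWr := tendsto_W_ratio (α := α) L hLpos hL hu0
      have hΦ : Tendsto (fun x : ℝ => (1 - pS ⌊x⌋₊ (u * x)) *
          ((ℙ {ω | T ω > u * x}).toReal / ((u * x) ^ (-α) * L (u * x))) *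
          (((u * x) ^ (-α) * L (u * x)) / (x ^ (-α) * L x))) atTop (𝓝 (u ^ (-α))) := by
        have := (hq.mul hFc).mul hWr
        simpa using this
      filter_upwards [hΦ.eventually_const_lt hua, eventually_gt_atTop (0:ℝ)] with x hx1 hx0
      have hux : 0 < u * x := by positivity
      have hWx : 0 < x ^ (-α) * L x := mul_pos (Real.rpow_pos_of_pos hx0 _) (hLpos x hx0)
      have hWux : 0 < (u * x) ^ (-α) * L (u * x) :=
        mul_pos (Real.rpow_pos_of_pos hux _) (hLpos _ hux)
      have hsand := sandwich_ge T hT hT0 N hN hmix x (u * x) hx0.le hux.le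
      have hΦeq : (1 - pS ⌊x⌋₊ (u * x)) *
          ((ℙ {ω | T ω > u * x}).toReal / ((u * x) ^ (-α) * L (u * x))) *
          (((u * x) ^ (-α) * L (u * x)) / (x ^ (-α) * L x))
          = ((1 - pS ⌊x⌋₊ (u * x)) * (ℙ {ω | T ω > u * x}).toReal) / (x ^ (-α) * L x) := by
        field_simp [(hLpos x hx0).ne', (hLpos _ hux).ne']
        try ring
        try exact Or.inl trivial
      rw [hΦeq] at hx1
      refine lt_of_lt_of_le hx1 ?_
      gcongr
      try exact hsand
    · -- upper bound: 1 < a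
      intro a ha
      obtain ⟨s, hs0, hs1, hsa⟩ := exists_lt_one_and_rpow_neg_lt hα0 ha
      have hscomp : Tendsto (fun x : ℝ => s * x) atTop atTop :=
        Tendsto.const_mul_atTop hs0 tendsto_id
      have hFc : Tendsto (fun x : ℝ =>
          (ℙ {ω | T ω > s * x}).toReal / ((s * x) ^ (-α) * L (s * x))) atTop (𝓝 1) := by
        have := hF.comp hscomp
        exact this
      have hWr := tendsto_W_ratio (α := α) L hLpos hL hs0
      have hE : Tendsto (fun x : ℝ => (1 - pS ⌊x⌋₊ (s * x)) / (x ^ (-α) * L x))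
          atTop (𝓝 0) := by
        have hdec := (one_sub_pS_decay hs0 hs1 (α + 1)).const_mul c⁻¹
        rw [mul_zero] at hdec
        refine squeeze_zero' ?_ ?_ hdec
        · filter_upwards [eventually_gt_atTop (0:ℝ)] with x hx0
          have h1 : pS ⌊x⌋₊ (s * x) ≤ 1 := pS_le_one (by positivity)
          have hWx : 0 < x ^ (-α) * L x := mul_pos (Real.rpow_pos_of_pos hx0 _) (hLpos x hx0)
          have h2 : 0 ≤ 1 - pS ⌊x⌋₊ (s * x) := by linarith
          positivity
        · filter_upwards [hWlb, eventually_gt_atTop (0:ℝ)] with x hlb hx0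
          have h1 : 0 ≤ 1 - pS ⌊x⌋₊ (s * x) := by
            have := pS_le_one (m := ⌊x⌋₊) (t := s * x) (by positivity)
            linarith
          have hcx : 0 < c * x ^ (-(α + 1)) :=
            mul_pos hc (Real.rpow_pos_of_pos hx0 _)
          have step1 : (1 - pS ⌊x⌋₊ (s * x)) / (x ^ (-α) * L x)
              ≤ (1 - pS ⌊x⌋₊ (s * x)) / (c * x ^ (-(α + 1))) := by
            gcongr
            try exact hlb
          refine step1.trans ?_
          have hxp : (0:ℝ) < x ^ (α + 1) := Real.rpow_pos_of_pos hx0 _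
          have hrw : (1 - pS ⌊x⌋₊ (s * x)) / (c * x ^ (-(α + 1)))
              = c⁻¹ * (x ^ (α + 1) * (1 - pS ⌊x⌋₊ (s * x))) := by
            rw [Real.rpow_neg hx0.le]
            field_simp
            try ring
            try exact Or.inl trivial
          rw [hrw]
      have hΨ : Tendsto (fun x : ℝ =>
          ((ℙ {ω | T ω > s * x}).toReal / ((s * x) ^ (-α) * L (s * x))) *
          (((s * x) ^ (-α) * L (s * x)) / (x ^ (-α) * L x)) +
          (1 - pS ⌊x⌋₊ (s * x)) / (x ^ (-α) * L x)) atTop (𝓝 (s ^ (-α))) := by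
        have := (hFc.mul hWr).add hE
        simpa using this
      filter_upwards [hΨ.eventually_lt_const hsa, eventually_gt_atTop (0:ℝ)] with x hx1 hx0
      have hsx : 0 < s * x := by positivity
      have hWx : 0 < x ^ (-α) * L x := mul_pos (Real.rpow_pos_of_pos hx0 _) (hLpos x hx0)
      have hWsx : 0 < (s * x) ^ (-α) * L (s * x) :=
        mul_pos (Real.rpow_pos_of_pos hsx _) (hLpos _ hsx)
      have hsand := sandwich_le T hT hT0 N hN hmix x (s * x) hx0.le hsx.le
      refine lt_of_le_of_lt ?_ hx1
      have hΨeq : ((ℙ {ω | T ω > s * x}).toReal / ((s * x) ^ (-α) * L (s * x))) *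
          (((s * x) ^ (-α) * L (s * x)) / (x ^ (-α) * L x)) +
          (1 - pS ⌊x⌋₊ (s * x)) / (x ^ (-α) * L x)
          = ((ℙ {ω | T ω > s * x}).toReal + (1 - pS ⌊x⌋₊ (s * x))) / (x ^ (-α) * L x) := by
        field_simp [(hLpos x hx0).ne', (hLpos _ hsx).ne']
        try ring
        try exact Or.inl trivial
      rw [hΨeq]
      gcongr
      try exact hsand
  · -- reverse direction
    intro hG
    obtain ⟨c, hc, hWlb⟩ := W_lb hα0 L hLpos (hL 2 two_pos)
      (fun x => (ℙ {ω | (N ω : ℝ) > x}).toReal)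
      (tail_antitone (fun ω => (N ω : ℝ))) hG
    have hE : ∀ s' : ℝ, 0 < s' → s' < 1 →
        Tendsto (fun x : ℝ => (1 - pS ⌊x⌋₊ (s' * x)) / (x ^ (-α) * L x)) atTop (𝓝 0) := by
      intro s' hs0 hs1
      have hdec := (one_sub_pS_decay hs0 hs1 (α + 1)).const_mul c⁻¹
      rw [mul_zero] at hdec
      refine squeeze_zero' ?_ ?_ hdec
      · filter_upwards [eventually_gt_atTop (0:ℝ)] with x hx0
        have h1 : pS ⌊x⌋₊ (s' * x) ≤ 1 := pS_le_one (by positivity)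
        have hWx : 0 < x ^ (-α) * L x := mul_pos (Real.rpow_pos_of_pos hx0 _) (hLpos x hx0)
        have h2 : 0 ≤ 1 - pS ⌊x⌋₊ (s' * x) := by linarith
        positivity
      · filter_upwards [hWlb, eventually_gt_atTop (0:ℝ)] with x hlb hx0
        have h1 : 0 ≤ 1 - pS ⌊x⌋₊ (s' * x) := by
          have := pS_le_one (m := ⌊x⌋₊) (t := s' * x) (by positivity)
          linarith
        have hcx : 0 < c * x ^ (-(α + 1)) := mul_pos hc (Real.rpow_pos_of_pos hx0 _)
        have step1 : (1 - pS ⌊x⌋₊ (s' * x)) / (x ^ (-α) * L x)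
            ≤ (1 - pS ⌊x⌋₊ (s' * x)) / (c * x ^ (-(α + 1))) := by
          gcongr
          try exact hlb
        refine step1.trans ?_
        have hxp : (0:ℝ) < x ^ (α + 1) := Real.rpow_pos_of_pos hx0 _
        have hrw : (1 - pS ⌊x⌋₊ (s' * x)) / (c * x ^ (-(α + 1)))
            = c⁻¹ * (x ^ (α + 1) * (1 - pS ⌊x⌋₊ (s' * x))) := by
          rw [Real.rpow_neg hx0.le]
          field_simp
          try ring
          try exact Or.inl trivial
        rw [hrw]
    refine tendsto_order.2 ⟨?_, ?_⟩
    · -- a < 1 : lower bound for F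
      intro a ha
      obtain ⟨s, hs0, hs1, hsa⟩ := exists_lt_one_and_lt_rpow hα0 ha
      have hWri := tendsto_W_ratio_inv (α := α) L hLpos hL hs0
      have hΘ : Tendsto (fun x : ℝ =>
          ((ℙ {ω | (N ω : ℝ) > x}).toReal / (x ^ (-α) * L x) -
            (1 - pS ⌊x⌋₊ (s * x)) / (x ^ (-α) * L x)) *
          ((x ^ (-α) * L x) / ((s * x) ^ (-α) * L (s * x)))) atTop (𝓝 (s ^ α)) := by
        have := (hG.sub (hE s hs0 hs1)).mul hWri
        simpa using this
      have hstep : ∀ᶠ x : ℝ in atTop,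
          a < (ℙ {ω | T ω > s * x}).toReal / ((s * x) ^ (-α) * L (s * x)) := by
        filter_upwards [hΘ.eventually_const_lt hsa, eventually_gt_atTop (0:ℝ)] with x hx1 hx0
        have hsx : 0 < s * x := by positivity
        have hWx : 0 < x ^ (-α) * L x := mul_pos (Real.rpow_pos_of_pos hx0 _) (hLpos x hx0)
        have hWsx : 0 < (s * x) ^ (-α) * L (s * x) :=
          mul_pos (Real.rpow_pos_of_pos hsx _) (hLpos _ hsx)
        have hsand := sandwich_le T hT hT0 N hN hmix x (s * x) hx0.le hsx.le
        have hΘeq : ((ℙ {ω | (N ω : ℝ) > x}).toReal / (x ^ (-α) * L x) -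
            (1 - pS ⌊x⌋₊ (s * x)) / (x ^ (-α) * L x)) *
            ((x ^ (-α) * L x) / ((s * x) ^ (-α) * L (s * x)))
            = ((ℙ {ω | (N ω : ℝ) > x}).toReal - (1 - pS ⌊x⌋₊ (s * x))) /
              ((s * x) ^ (-α) * L (s * x)) := by
          field_simp [(hLpos x hx0).ne', (hLpos _ hsx).ne']
          try ring
          try exact Or.inl trivial
        rw [hΘeq] at hx1
        refine lt_of_lt_of_le hx1 ?_
        gcongr
        try linarith
      have hdiv : Tendsto (fun y : ℝ => y / s) atTop atTop :=
        Tendsto.atTop_div_const hs0 tendsto_id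
      have := hdiv.eventually hstep
      filter_upwards [this] with y hy
      have hyeq : s * (y / s) = y := by field_simp
      rwa [hyeq] at hy
    · -- 1 < a : upper bound for F
      intro a ha
      obtain ⟨u, hu1, hua⟩ := exists_one_lt_and_rpow_lt hα0 ha
      have hu0 : (0:ℝ) < u := lt_trans one_pos hu1
      have hq : Tendsto (fun x : ℝ => 1 - pS ⌊x⌋₊ (u * x)) atTop (𝓝 1) := by
        have := (pS_tendsto_zero hu1).const_sub 1
        simpa using this
      have hWri := tendsto_W_ratio_inv (α := α) L hLpos hL hu0
      have hΘ : Tendsto (fun x : ℝ =>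
          ((ℙ {ω | (N ω : ℝ) > x}).toReal / (x ^ (-α) * L x)) *
          ((x ^ (-α) * L x) / ((u * x) ^ (-α) * L (u * x))) *
          (1 - pS ⌊x⌋₊ (u * x))⁻¹) atTop (𝓝 (u ^ α)) := by
        have := (hG.mul hWri).mul (hq.inv₀ one_ne_zero)
        simpa using this
      have hqpos : ∀ᶠ x : ℝ in atTop, 0 < 1 - pS ⌊x⌋₊ (u * x) :=
        hq.eventually_const_lt one_pos
      have hstep : ∀ᶠ x : ℝ in atTop,
          (ℙ {ω | T ω > u * x}).toReal / ((u * x) ^ (-α) * L (u * x)) < a := by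
        filter_upwards [hΘ.eventually_lt_const hua, hqpos, eventually_gt_atTop (0:ℝ)]
          with x hx1 hqx hx0
        have hux : 0 < u * x := by positivity
        have hWx : 0 < x ^ (-α) * L x := mul_pos (Real.rpow_pos_of_pos hx0 _) (hLpos x hx0)
        have hWux : 0 < (u * x) ^ (-α) * L (u * x) :=
          mul_pos (Real.rpow_pos_of_pos hux _) (hLpos _ hux)
        have hsand := sandwich_ge T hT hT0 N hN hmix x (u * x) hx0.le hux.le
        have hFle : (ℙ {ω | T ω > u * x}).toReal
            ≤ (ℙ {ω | (N ω : ℝ) > x}).toReal / (1 - pS ⌊x⌋₊ (u * x)) := by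
          rw [le_div_iff₀ hqx]
          calc (ℙ {ω | T ω > u * x}).toReal * (1 - pS ⌊x⌋₊ (u * x))
              = (1 - pS ⌊x⌋₊ (u * x)) * (ℙ {ω | T ω > u * x}).toReal := by ring
            _ ≤ _ := hsand
        have hΘeq : ((ℙ {ω | (N ω : ℝ) > x}).toReal / (x ^ (-α) * L x)) *
            ((x ^ (-α) * L x) / ((u * x) ^ (-α) * L (u * x))) *
            (1 - pS ⌊x⌋₊ (u * x))⁻¹
            = ((ℙ {ω | (N ω : ℝ) > x}).toReal / (1 - pS ⌊x⌋₊ (u * x))) /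
              ((u * x) ^ (-α) * L (u * x)) := by
          field_simp [(hLpos x hx0).ne', (hLpos _ hux).ne', hqx.ne']
          try ring
          try exact Or.inl trivial
        rw [hΘeq] at hx1
        refine lt_of_le_of_lt ?_ hx1
        gcongr
        try exact hFle
      have hdiv : Tendsto (fun y : ℝ => y / u) atTop atTop :=
        Tendsto.atTop_div_const hu0 tendsto_id
      have := hdiv.eventually hstep
      filter_upwards [this] with y hy
      have hyeq : u * (y / u) = y := by field_simp
      rwa [hyeq] at hy
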